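/- Let m, k, n be positive integers with m ≤ n and k ≤ n, let s ∈ {0,1}^n, and let s' ∈ σ_k(s). Then the number of patterns p ∈ {0,1}^m such that s' is not p-preserving with respect to s is at most k(2m − 1). -/

import Mathlib

/-- `Subseq k x` is the set of all subsequences of `x` obtained by deleting exactly `k` symbols,
i.e. all subsequences of `x` of length `|x| - k`. -/
def Subseq {α : Type*} (k : ℕ) (x : List α) : Set (List α) :=
  {y | y.Sublist x ∧ y.length + k = x.length}

/-- The string obtained from `s` by deleting the bits at the positions in `I`. -/
def deleteAt (s : List Bool) (I : Finset ℕ) : List Bool :=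
  ((List.range s.length).filter (fun i => i ∉ I)).map (fun i => s.getD i false)

/-- The number of occurrences of `p` as a substring of `s`. -/
def occCount (p s : List Bool) : ℕ :=
  ((List.range s.length).filter (fun a => (s.drop a).take p.length = p)).length

/-- `s'` is `p`-preserving with respect to `s`: `s'` is obtained from `s` by deleting `k` bits,
no occurrence of `p` in `s` contains a deleted bit, and `s` and `s'` have equally many
occurrences of `p`. -/
def Preserving (k : ℕ) (p s s' : List Bool) : Prop :=
  ∃ I : Finset ℕ, I.card = k ∧ (∀ i ∈ I, i < s.length) ∧ s' = deleteAt s I ∧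
    (∀ a : ℕ, (s.drop a).take p.length = p →
      ∀ i ∈ I, ¬ (a ≤ i ∧ i < a + p.length)) ∧
    occCount p s = occCount p s'


namespace StmtAux

def keptL (n : ℕ) (I : Finset ℕ) : List ℕ := (List.range n).filter (fun i => i ∉ I)

def cnt (I : Finset ℕ) (a : ℕ) : ℕ := (keptL a I).length

lemma cnt_succ_not_mem {I : Finset ℕ} {a : ℕ} (h : a ∉ I) : cnt I (a+1) = cnt I a + 1 := by
  simp [cnt, keptL, List.range_succ, List.filter_append, h]

lemma cnt_succ_mem {I : Finset ℕ} {a : ℕ} (h : a ∈ I) : cnt I (a+1) = cnt I a := by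
  simp [cnt, keptL, List.range_succ, List.filter_append, h]

lemma cnt_mono (I : Finset ℕ) {a b : ℕ} (h : a ≤ b) : cnt I a ≤ cnt I b :=
  ((List.range_sublist.2 h).filter _).length_le

lemma cnt_add {I : Finset ℕ} {a j : ℕ} (h : ∀ c, a ≤ c → c < a + j → c ∉ I) :
    cnt I (a + j) = cnt I a + j := by
  induction j with
  | zero => rfl
  | succ j ih =>
      have h1 : cnt I (a + j) = cnt I a + j := ih (fun c hc hc' => h c hc (by omega))
      have h2 : a + j ∉ I := h _ (by omega) (by omega)
      have h3 := cnt_succ_not_mem h2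
      have e : a + (j+1) = a + j + 1 := by omega
      rw [e, h3, h1]; omega

lemma keptL_succ (n : ℕ) (I : Finset ℕ) :
    keptL (n+1) I = keptL n I ++ (List.filter (fun i => decide (i ∉ I)) [n]) := by
  simp [keptL, List.range_succ, List.filter_append]

lemma length_keptL (n : ℕ) (I : Finset ℕ) : (keptL n I).length = cnt I n := rfl

lemma cnt_lt_cnt {I : Finset ℕ} {a n : ℕ} (ha : a < n) (haI : a ∉ I) : cnt I a < cnt I n := by
  have := cnt_succ_not_mem haI
  have := cnt_mono I (show a + 1 ≤ n by omega)
  omega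

lemma keptL_getD {I : Finset ℕ} {a : ℕ} : ∀ {n : ℕ}, a < n → a ∉ I →
    (keptL n I).getD (cnt I a) 0 = a := by
  intro n
  induction n with
  | zero => omega
  | succ n ih =>
      intro ha haI
      rcases Nat.lt_or_ge a n with h | h
      · rw [keptL_succ, List.getD_append]
        · exact ih h haI
        · rw [length_keptL]; exact cnt_lt_cnt h haI
      · have : a = n := by omega
        subst this
        rw [keptL_succ]
        simp [haI, List.getD_append_right, length_keptL, List.getD]
        rw [List.getElem_append_right (by rw [length_keptL])]; simp [length_keptL]

lemma keptL_sorted (n : ℕ) (I : Finset ℕ) : (keptL n I).Pairwise (· < ·) :=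
  (List.pairwise_lt_range (n := n)).sublist List.filter_sublist

lemma mem_keptL {n : ℕ} {I : Finset ℕ} {x : ℕ} : x ∈ keptL n I ↔ x < n ∧ x ∉ I := by
  simp [keptL, List.mem_filter, List.mem_range]

lemma keptL_getD_mem {n : ℕ} {I : Finset ℕ} {t : ℕ} (ht : t < (keptL n I).length) :
    (keptL n I).getD t 0 < n ∧ (keptL n I).getD t 0 ∉ I := by
  rw [List.getD_eq_getElem _ _ ht]
  exact mem_keptL.1 (List.getElem_mem ht)

lemma keptL_strictMono {n : ℕ} {I : Finset ℕ} {t u : ℕ} (h : t < u)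
    (hu : u < (keptL n I).length) :
    (keptL n I).getD t 0 < (keptL n I).getD u 0 := by
  have ht : t < (keptL n I).length := lt_trans h hu
  rw [List.getD_eq_getElem _ _ ht, List.getD_eq_getElem _ _ hu]
  exact (keptL_sorted n I).sortedLT.strictMono_get (show (⟨t, ht⟩ : Fin _) < ⟨u, hu⟩ from h)

lemma cnt_keptL_getD {n : ℕ} {I : Finset ℕ} {t : ℕ} (ht : t < (keptL n I).length) :
    cnt I ((keptL n I).getD t 0) = t := by
  obtain ⟨h1, h2⟩ := keptL_getD_mem ht
  have key : (keptL n I).getD (cnt I ((keptL n I).getD t 0)) 0 = (keptL n I).getD t 0 :=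
    keptL_getD h1 h2
  have hc : cnt I ((keptL n I).getD t 0) < (keptL n I).length := by
    rw [length_keptL]; exact cnt_lt_cnt h1 h2
  rcases lt_trichotomy (cnt I ((keptL n I).getD t 0)) t with h | h | h
  · have := keptL_strictMono h ht; omega
  · exact h
  · have := keptL_strictMono h hc; omega

lemma window_eq {u v : List Bool} {a b M : ℕ} (hu : a + M ≤ u.length) (hv : b + M ≤ v.length)
    (h : ∀ j, j < M → u.getD (a+j) false = v.getD (b+j) false) :
    (u.drop a).take M = (v.drop b).take M := by
  apply List.ext_getElem
  · simp; omega
  · intro i h1 h2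
    have hi : i < M := by simp at h1; omega
    simp only [List.getElem_take, List.getElem_drop]
    have := h i hi
    rwa [List.getD_eq_getElem _ _ (by omega), List.getD_eq_getElem _ _ (by omega)] at this

lemma window_bound {s p : List Bool} {a : ℕ} (hp : 1 ≤ p.length)
    (h : (s.drop a).take p.length = p) : a + p.length ≤ s.length := by
  have := congrArg List.length h
  simp [List.length_take, List.length_drop] at this
  omega

end StmtAux

namespace StmtAux

lemma deleteAt_eq (s : List Bool) (I : Finset ℕ) :
    deleteAt s I = (keptL s.length I).map (fun i => s.getD i false) := rfl

lemma keptL_shift (n : ℕ) (I J : Finset ℕ) (hsucc : ∀ i, i + 1 ∈ J ↔ i ∈ I) :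
    keptL (n+1) J = (if 0 ∈ J then [] else [0]) ++ (keptL n I).map (· + 1) := by
  unfold keptL
  rw [List.range_succ_eq_map]
  rw [List.filter_cons]
  have : List.filter (fun i => decide (i ∉ J)) (List.map Nat.succ (List.range n)) =
      List.map (· + 1) (List.filter (fun i => decide (i ∉ I)) (List.range n)) := by
    rw [List.filter_map]
    have : List.filter ((fun i => decide (i ∉ J)) ∘ Nat.succ) (List.range n) =
        List.filter (fun i => decide (i ∉ I)) (List.range n) := by
      apply List.filter_congr
      intro x _
      simp [Function.comp, hsucc x, Nat.succ_eq_add_one]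
    rw [this]
  rw [this]
  by_cases h0 : 0 ∈ J <;> simp [h0]

lemma exists_deleteAt {s' s : List Bool} (h : s'.Sublist s) :
    ∃ I : Finset ℕ, I.card + s'.length = s.length ∧ (∀ i ∈ I, i < s.length) ∧
      s' = deleteAt s I := by
  induction h with
  | slnil => exact ⟨∅, by simp [deleteAt]⟩
  | @cons l₁ l₂ b hsub ih =>
      obtain ⟨I, hcard, hlt, hdel⟩ := ih
      have hinj : Function.Injective (· + 1 : ℕ → ℕ) := fun a b h => by simpa using h
      refine ⟨insert 0 (I.image (· + 1)), ?_, ?_, ?_⟩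
      · rw [Finset.card_insert_of_notMem (by simp), Finset.card_image_of_injective _ hinj]
        simp only [List.length_cons]; omega
      · intro i hi
        simp only [Finset.mem_insert, Finset.mem_image] at hi
        rcases hi with rfl | ⟨j, hj, rfl⟩
        · simp
        · have := hlt j hj; simp; omega
      · rw [deleteAt_eq]
        have hs : ∀ i, i + 1 ∈ insert 0 (I.image (· + 1)) ↔ i ∈ I := by
          intro i
          simp only [Finset.mem_insert, Finset.mem_image]
          constructor
          · rintro (h | ⟨j, hj, hji⟩)
            · omega
            · have : j = i := by omega
              subst this; exact hj
          · intro h; exact Or.inr ⟨i, h, rfl⟩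
        rw [show (b :: l₂).length = l₂.length + 1 from rfl,
          keptL_shift l₂.length I _ hs]
        rw [if_pos (Finset.mem_insert_self 0 _)]
        simp only [List.nil_append, List.map_map]
        rw [hdel, deleteAt_eq]
        apply List.map_congr_left
        intro i _
        simp [Function.comp]
  | @cons_cons l₁ l₂ b hsub ih =>
      obtain ⟨I, hcard, hlt, hdel⟩ := ih
      have hinj : Function.Injective (· + 1 : ℕ → ℕ) := fun a b h => by simpa using h
      refine ⟨I.image (· + 1), ?_, ?_, ?_⟩
      · rw [Finset.card_image_of_injective _ hinj]
        simp only [List.length_cons]; omega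
      · intro i hi
        simp only [Finset.mem_image] at hi
        obtain ⟨j, hj, rfl⟩ := hi
        have := hlt j hj; simp; omega
      · rw [deleteAt_eq]
        have hs : ∀ i, i + 1 ∈ I.image (· + 1) ↔ i ∈ I := by
          intro i
          simp only [Finset.mem_image]
          constructor
          · rintro ⟨j, hj, hji⟩
            have : j = i := by omega
            subst this; exact hj
          · intro h; exact ⟨i, h, rfl⟩
        rw [show (b :: l₂).length = l₂.length + 1 from rfl,
          keptL_shift l₂.length I _ hs]
        have h0 : (0 : ℕ) ∉ I.image (· + 1) := by simp
        rw [if_neg h0]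
        simp only [List.singleton_append, List.map_cons, List.map_map]
        rw [hdel, deleteAt_eq]
        congr 1

end StmtAux

namespace StmtAux

lemma keptL_lt_iff {n : ℕ} {I : Finset ℕ} {t u : ℕ} (ht : t < (keptL n I).length)
    (hu : u < (keptL n I).length) :
    (keptL n I).getD t 0 < (keptL n I).getD u 0 ↔ t < u := by
  constructor
  · intro h
    rcases lt_trichotomy t u with h' | h' | h'
    · exact h'
    · subst h'; omega
    · have := keptL_strictMono h' ht; omega
  · intro h; exact keptL_strictMono h hu

end StmtAux


lemma occCount_eq_card (p s : List Bool) :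
    occCount p s
      = ((Finset.range s.length).filter (fun a => (s.drop a).take p.length = p)).card := rfl

open StmtAux
theorem stmt_11 (m k n : ℕ) (hm : 1 ≤ m) (hmn : m ≤ n) (hk : 1 ≤ k) (hkn : k ≤ n)
    (s s' : List Bool) (hs : s.length = n) (hs' : s' ∈ Subseq k s) :
    {p : List Bool | p.length = m ∧ ¬ Preserving k p s s'}.ncard ≤ k * (2 * m - 1) := by
  subst hs
  obtain ⟨hsub, hlen⟩ := hs'
  obtain ⟨I, hIcard, hIlt, hIdel⟩ := exists_deleteAt hsub
  have hk' : I.card = k := by omega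
  have hs'len : s'.length = cnt I s.length := by
    rw [hIdel, deleteAt_eq]; simp [length_keptL]
  have hval : ∀ t, t < (keptL s.length I).length →
      s'.getD t false = s.getD ((keptL s.length I).getD t 0) false := by
    intro t ht
    have ht' : t < s'.length := by rw [hs'len, ← length_keptL]; exact ht
    rw [List.getD_eq_getElem _ _ ht', List.getD_eq_getElem _ _ ht,
        List.getElem_of_eq (hIdel.trans (deleteAt_eq s I)) ht', List.getElem_map]
  set B1 : Finset (List Bool) :=
    (I ×ˢ Finset.range m).image (fun q => (s.drop (q.1 - q.2)).take m) with hB1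
  set B2 : Finset (List Bool) :=
    (I ×ˢ Finset.range (m-1)).image
      (fun q => (s'.drop (cnt I q.1 - 1 - q.2)).take m) with hB2
  have main : {p : List Bool | p.length = m ∧ ¬ Preserving k p s s'} ⊆ ↑(B1 ∪ B2) := by
    intro p hp
    obtain ⟨hpm, hnp⟩ := hp
    by_contra hB
    rw [Finset.coe_union, Set.mem_union] at hB
    push_neg at hB
    obtain ⟨hB1', hB2'⟩ := hB
    apply hnp
    have hfree : ∀ a : ℕ, (s.drop a).take p.length = p →
        ∀ i ∈ I, ¬ (a ≤ i ∧ i < a + p.length) := by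
      rintro a ha i hi ⟨h1, h2⟩
      apply hB1'
      rw [hB1]
      simp only [Finset.coe_image, Set.mem_image, Finset.mem_coe, Finset.mem_product]
      refine ⟨(i, i - a), ⟨hi, ?_⟩, ?_⟩
      · rw [Finset.mem_range, ← hpm]; omega
      · have h3 : i - (i - a) = a := by omega
        dsimp only
        rw [h3, ← hpm, ha]
    refine ⟨I, hk', hIlt, hIdel, hfree, ?_⟩
    rw [occCount_eq_card, occCount_eq_card]
    set S := (Finset.range s.length).filter (fun a => (s.drop a).take p.length = p) with hS
    set S' := (Finset.range s'.length).filter (fun a => (s'.drop a).take p.length = p) with hS'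
    have hSmem : ∀ a ∈ S, a < s.length ∧ (s.drop a).take p.length = p := by
      intro a ha; rw [hS, Finset.mem_filter, Finset.mem_range] at ha; exact ha
    have hS'mem : ∀ t ∈ S', t < s'.length ∧ (s'.drop t).take p.length = p := by
      intro t ht; rw [hS', Finset.mem_filter, Finset.mem_range] at ht; exact ht
    have hSfree : ∀ a ∈ S, ∀ c, a ≤ c → c < a + m → c ∉ I := by
      intro a ha c h1 h2 hcI
      exact hfree a (hSmem a ha).2 c hcI ⟨h1, by rw [hpm]; omega⟩
    have hSbound : ∀ a ∈ S, a + m ≤ s.length := by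
      intro a ha
      have := window_bound (by omega) (hSmem a ha).2
      omega
    have hφcnt : ∀ a ∈ S, ∀ j, j ≤ m → cnt I (a + j) = cnt I a + j := by
      intro a ha j hj
      exact cnt_add (fun c h1 h2 => hSfree a ha c h1 (by omega))
    have hφmem : ∀ a ∈ S, cnt I a ∈ S' := by
      intro a ha
      obtain ⟨haN, haw⟩ := hSmem a ha
      have hb := hSbound a ha
      have hc := hφcnt a ha m le_rfl
      rw [hS', Finset.mem_filter, Finset.mem_range]
      have hlt : cnt I a + m ≤ s'.length := by
        rw [hs'len]; have := cnt_mono I hb; omega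
      refine ⟨by omega, ?_⟩
      rw [hpm] at haw ⊢
      rw [← haw]
      apply window_eq hlt hb
      intro j hj
      have hj1 : cnt I (a + j) = cnt I a + j := hφcnt a ha j (by omega)
      have hkeptj : a + j ∉ I := hSfree a ha (a + j) (by omega) (by omega)
      have hjN : a + j < s.length := by omega
      have hKj : (keptL s.length I).getD (cnt I (a + j)) 0 = a + j := keptL_getD hjN hkeptj
      have hcl : cnt I a + j < (keptL s.length I).length := by
        rw [length_keptL, ← hj1]; exact cnt_lt_cnt hjN hkeptj
      rw [hval _ hcl, ← hj1, hKj]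
    have hφinj : ∀ a ∈ S, ∀ b ∈ S, a < b → cnt I a < cnt I b := by
      intro a ha b hb hab
      rcases le_or_gt (a + m) b with h | h
      · have h1 := hφcnt a ha m le_rfl
        have h2 := cnt_mono I h
        omega
      · have h1 := hφcnt a ha (b - a) (by omega)
        rw [show a + (b - a) = b by omega] at h1
        omega
    have card1 : S.card ≤ S'.card := by
      apply Finset.card_le_card_of_injOn (fun a => cnt I a) hφmem
      intro a ha b hb hab
      simp only at hab
      rcases lt_trichotomy a b with h | h | h
      · have := hφinj a (Finset.mem_coe.1 ha) b (Finset.mem_coe.1 hb) h; omega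
      · exact h
      · have := hφinj b (Finset.mem_coe.1 hb) a (Finset.mem_coe.1 ha) h; omega
    have hψ : ∀ t ∈ S', ∀ j, j < m →
        (keptL s.length I).getD (t + j) 0 = (keptL s.length I).getD t 0 + j := by
      intro t ht' j
      obtain ⟨htl, htw⟩ := hS'mem t ht'
      have htm : t + m ≤ s'.length := by have := window_bound (by omega) htw; omega
      induction j with
      | zero => intro _; simp
      | succ j ih =>
        intro hj
        have hj' : j < m := by omega
        have h1 := ih hj'
        have htj : t + j < (keptL s.length I).length := by
          rw [length_keptL, ← hs'len]; omega
        have htj1 : t + j + 1 < (keptL s.length I).length := by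
          rw [length_keptL, ← hs'len]; omega
        have hmono := keptL_strictMono (n := s.length) (I := I)
          (show t + j < t + j + 1 by omega) htj1
        by_cases hI2 : ((keptL s.length I).getD (t + j) 0 + 1) ∈ I
        · exfalso
          apply hB2'
          rw [hB2]
          simp only [Finset.coe_image, Set.mem_image, Finset.mem_coe, Finset.mem_product]
          refine ⟨((keptL s.length I).getD (t + j) 0 + 1, j), ⟨hI2, ?_⟩, ?_⟩
          · rw [Finset.mem_range]; omega
          · dsimp only
            have h2 : (keptL s.length I).getD (t + j) 0 ∉ I := (keptL_getD_mem htj).2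
            have h3 : cnt I ((keptL s.length I).getD (t + j) 0 + 1) = t + j + 1 := by
              rw [cnt_succ_not_mem h2, cnt_keptL_getD htj]
            rw [h3, show t + j + 1 - 1 - j = t by omega, ← hpm, htw]
        · by_cases he : (keptL s.length I).getD (t + j) 0 + 1
              = (keptL s.length I).getD (t + j + 1) 0
          · rw [show t + (j + 1) = t + j + 1 by omega, ← he, h1]; omega
          · exfalso
            have hiN : (keptL s.length I).getD (t + j) 0 + 1 < s.length := by
              have := (keptL_getD_mem htj1).1; omega
            have hkey := keptL_getD (I := I) hiN hI2
            have hclt : cnt I ((keptL s.length I).getD (t + j) 0 + 1)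
                < (keptL s.length I).length := by
              rw [length_keptL]; exact cnt_lt_cnt hiN hI2
            have p1 := (keptL_lt_iff htj hclt).1 (by rw [hkey]; omega)
            have p2 := (keptL_lt_iff hclt htj1).1 (by rw [hkey]; omega)
            omega
    have hψmem : ∀ t ∈ S', (keptL s.length I).getD t 0 ∈ S := by
      intro t ht'
      obtain ⟨htl, htw⟩ := hS'mem t ht'
      have htm : t + m ≤ s'.length := by have := window_bound (by omega) htw; omega
      have ht0 : t < (keptL s.length I).length := by rw [length_keptL, ← hs'len]; omega
      have htm1 : t + (m - 1) < (keptL s.length I).length := by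
        rw [length_keptL, ← hs'len]; omega
      have hlast := hψ t ht' (m - 1) (by omega)
      have haM : (keptL s.length I).getD t 0 + m ≤ s.length := by
        have := (keptL_getD_mem htm1).1
        omega
      rw [hS, Finset.mem_filter, Finset.mem_range]
      refine ⟨by omega, ?_⟩
      rw [hpm] at htw ⊢
      rw [← htw]
      apply window_eq haM htm
      intro j hj
      have htj : t + j < (keptL s.length I).length := by
        rw [length_keptL, ← hs'len]; omega
      rw [hval (t + j) htj, hψ t ht' j hj]
    have card2 : S'.card ≤ S.card := by
      apply Finset.card_le_card_of_injOn (fun t => (keptL s.length I).getD t 0) hψmem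
      intro a ha b hb hab
      have ha0 : a < (keptL s.length I).length := by
        rw [length_keptL, ← hs'len]; exact (hS'mem a (Finset.mem_coe.1 ha)).1
      have hb0 : b < (keptL s.length I).length := by
        rw [length_keptL, ← hs'len]; exact (hS'mem b (Finset.mem_coe.1 hb)).1
      rcases lt_trichotomy a b with h | h | h
      · have := keptL_strictMono (n := s.length) (I := I) h hb0
        simp only at hab; omega
      · exact h
      · have := keptL_strictMono (n := s.length) (I := I) h ha0
        simp only at hab; omega
    omega
  have hcB1 : B1.card ≤ k * m := by
    refine le_trans (Finset.card_image_le) ?_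
    rw [Finset.card_product, Finset.card_range, hk']
  have hcB2 : B2.card ≤ k * (m - 1) := by
    refine le_trans (Finset.card_image_le) ?_
    rw [Finset.card_product, Finset.card_range, hk']
  calc {p : List Bool | p.length = m ∧ ¬ Preserving k p s s'}.ncard
      ≤ (B1 ∪ B2).card := by
        rw [← Set.ncard_coe_finset]
        exact Set.ncard_le_ncard main (Finset.finite_toSet _)
    _ ≤ B1.card + B2.card := Finset.card_union_le _ _
    _ ≤ k * m + k * (m - 1) := Nat.add_le_add hcB1 hcB2
    _ = k * (2 * m - 1) := by rw [← Nat.mul_add]; congr 1; omega
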